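/- arXiv:math/0101260 — 2 statements merged into one kernel-verified Lean document; each statement's English description precedes it below -/
import Mathlib

section
/- Let 0 → A →^{d₀} B →^{d₁} C → 0 be a short exact sequence of finite-dimensional vector spaces with chosen bases of sizes p, q, r (so p + r = q). Let D₀, D₁ be the matrices of d₀, d₁. Let D̄₁ be the submatrix of D₁ consisting of all r rows and the first r columns, and D̄₀ the submatrix of D₀ consisting of the last p rows and all p columns. Then det(D̄₀) ≠ 0 if and only if det(D̄₁) ≠ 0. -/
/-- For a short exact sequence `0 → A → B → C → 0` (here realized by matrices
`D₀ : k^p → k^q` and `D₁ : k^q → k^r` with `q = p + r`), the minor of `D₁` on the first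
`r` columns is nonzero iff the minor of `D₀` on the last `p` rows is nonzero. -/
theorem exact_complex_minors {k : Type*} [Field k] (p q r : ℕ) (hq : q = p + r)
    (D₀ : Matrix (Fin q) (Fin p) k) (D₁ : Matrix (Fin r) (Fin q) k)
    (hinj : Function.Injective D₀.mulVecLin)
    (hsurj : Function.Surjective D₁.mulVecLin)
    (hexact : LinearMap.range D₀.mulVecLin = LinearMap.ker D₁.mulVecLin) :
    (D₀.submatrix (fun i : Fin p => Fin.cast (by omega) (Fin.natAdd r i)) id).det ≠ 0 ↔
      (D₁.submatrix id (fun j : Fin r => Fin.castLE (by omega) j)).det ≠ 0 := by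
  have hrp : r + p = q := by omega
  let e : Fin r ⊕ Fin p ≃ Fin q := finSumFinEquiv.trans (finCongr hrp)
  have he1 : ∀ j : Fin r, e (Sum.inl j) = Fin.castLE (by omega) j := fun j => Fin.ext rfl
  have he2 : ∀ i : Fin p, e (Sum.inr i) = Fin.cast hrp (Fin.natAdd r i) := fun i => Fin.ext rfl
  rw [not_iff_not, ← Matrix.exists_mulVec_eq_zero_iff, ← Matrix.exists_mulVec_eq_zero_iff]
  constructor
  · rintro ⟨u, hu, hu0⟩
    set w := D₀.mulVec u with hw
    have hwlast : ∀ i : Fin p, w (Fin.cast hrp (Fin.natAdd r i)) = 0 := by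
      intro i
      have h := congrFun hu0 i
      simpa [Matrix.mulVec, dotProduct, Matrix.submatrix, hw] using h
    have hker : D₁.mulVec w = 0 := by
      have hmem : w ∈ LinearMap.ker D₁.mulVecLin := by
        rw [← hexact]; exact ⟨u, rfl⟩
      simpa using hmem
    refine ⟨fun j => w (Fin.castLE (by omega) j), ?_, ?_⟩
    · intro hv
      apply hu
      apply hinj
      simp only [map_zero]
      show D₀.mulVec u = 0
      funext x
      obtain ⟨y, rfl⟩ := e.surjective x
      cases y with
      | inl j =>
        have := congrFun hv j
        rw [he1 j]
        simpa using this
      | inr i =>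
        rw [he2 i]
        simpa using hwlast i
    · funext i
      have h := congrFun hker i
      rw [Matrix.mulVec, dotProduct, ← Equiv.sum_comp e,
        Fintype.sum_sum_type] at h
      simp only [he1, he2] at h
      have h2 : ∑ i_1 : Fin p, D₁ i (Fin.cast hrp (Fin.natAdd r i_1)) *
          w (Fin.cast hrp (Fin.natAdd r i_1)) = 0 := by
        apply Finset.sum_eq_zero
        intro j _
        rw [hwlast j, mul_zero]
      rw [h2, add_zero] at h
      simpa [Matrix.mulVec, dotProduct, Matrix.submatrix] using h
  · rintro ⟨v, hv, hv0⟩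
    set w : Fin q → k := fun x => Sum.elim v 0 (e.symm x) with hwdef
    have hwl : ∀ j : Fin r, w (e (Sum.inl j)) = v j := by intro j; simp [hwdef]
    have hwr : ∀ i : Fin p, w (e (Sum.inr i)) = 0 := by intro i; simp [hwdef]
    have hker : D₁.mulVec w = 0 := by
      funext i
      rw [Matrix.mulVec, dotProduct, ← Equiv.sum_comp e, Fintype.sum_sum_type]
      have h2 : ∑ i_1 : Fin p, D₁ i (e (Sum.inr i_1)) * w (e (Sum.inr i_1)) = 0 := by
        apply Finset.sum_eq_zero
        intro j _
        rw [hwr j, mul_zero]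
      rw [h2, add_zero]
      have h := congrFun hv0 i
      simp only [Matrix.mulVec, dotProduct, Matrix.submatrix_apply, id_eq,
        Pi.zero_apply] at h ⊢
      simp only [he1, hwl]
      convert h using 2
      rw [← he1, hwl]
    have hmem : w ∈ LinearMap.range D₀.mulVecLin := by
      rw [hexact]
      simpa using hker
    obtain ⟨u, huw⟩ := hmem
    refine ⟨u, ?_, ?_⟩
    · intro hu0
      apply hv
      funext j
      have : w (e (Sum.inl j)) = 0 := by
        rw [← huw, hu0]
        simp
      rw [hwl] at this
      exact this
    · funext i
      have : (D₀.mulVec u) (Fin.cast hrp (Fin.natAdd r i)) = 0 := by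
        have : w (e (Sum.inr i)) = 0 := hwr i
        rw [← huw] at this
        rw [← he2 i]
        simpa using this
      simpa [Matrix.mulVec, dotProduct, Matrix.submatrix] using this
end

section
/- Let 0 → A →^{d₀} B →^{d₁} C → 0 be a short exact sequence of finite-dimensional vector spaces with bases of sizes p, q, r (p + r = q), matrices D₀ (q×p) and D₁ (r×q). For an ordered subset I = {i₁ < ... < i_r} ⊆ {1,...,q}, let D̄_{0,I} be the p×p submatrix of D₀ of rows indexed by the complement of I, and D̄_{1,I} the r×r submatrix of D₁ of columns indexed by I. Then det(D̄_{0,I}) ≠ 0 if and only if det(D̄_{1,I}) ≠ 0, and the ratio det(D̄_{1,I})/det(D̄_{0,I}) is, up to the sign of an explicit permutation, independent of the choice of I (it equals the determinant of the complex). -/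
/-- For a short exact sequence `0 → A → B → C → 0` realized by matrices `D₀, D₁` with
`q = p + r`: for every subset `I ⊆ {1,…,q}` of cardinality `r`, the maximal minor of `D₀`
on the rows in the complement of `I` is nonzero iff the maximal minor of `D₁` on the
columns in `I` is nonzero, and up to sign their ratio is a scalar `lam` (the determinant
of the complex) independent of `I`. -/
theorem exact_complex_determinant {k : Type*} [Field k] (p q r : ℕ) (hq : q = p + r)
    (D₀ : Matrix (Fin q) (Fin p) k) (D₁ : Matrix (Fin r) (Fin q) k)
    (hinj : Function.Injective D₀.mulVecLin)
    (hsurj : Function.Surjective D₁.mulVecLin)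
    (hexact : LinearMap.range D₀.mulVecLin = LinearMap.ker D₁.mulVecLin) :
    ∃ lam : k, ∀ (I : Finset (Fin q)) (hI : I.card = r) (hIc : Iᶜ.card = p),
      ((D₀.submatrix (Iᶜ.orderEmbOfFin hIc) id).det ≠ 0 ↔
        (D₁.submatrix id (I.orderEmbOfFin hI)).det ≠ 0) ∧
      ((D₁.submatrix id (I.orderEmbOfFin hI)).det
          = lam * (D₀.submatrix (Iᶜ.orderEmbOfFin hIc) id).det ∨
        (D₁.submatrix id (I.orderEmbOfFin hI)).det
          = -(lam * (D₀.submatrix (Iᶜ.orderEmbOfFin hIc) id).det)) := by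
  classical
  -- a left inverse `G` of `D₀`
  obtain ⟨g, hg⟩ := LinearMap.exists_leftInverse_of_injective D₀.mulVecLin
    (LinearMap.ker_eq_bot.mpr hinj)
  set G : Matrix (Fin p) (Fin q) k := LinearMap.toMatrix' g with hGdef
  have hGD₀ : G * D₀ = 1 := by
    have h : LinearMap.toMatrix' g * LinearMap.toMatrix' D₀.mulVecLin = 1 := by
      rw [← LinearMap.toMatrix'_comp, hg, LinearMap.toMatrix'_id]
    rw [← Matrix.toLin'_apply', LinearMap.toMatrix'_toLin'] at h
    exact h
  -- a right inverse `S` of `D₁`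
  obtain ⟨s, hs⟩ := LinearMap.exists_rightInverse_of_surjective D₁.mulVecLin
    (LinearMap.range_eq_top.mpr hsurj)
  set S : Matrix (Fin q) (Fin r) k := LinearMap.toMatrix' s with hSdef
  have hD₁S : D₁ * S = 1 := by
    have h : LinearMap.toMatrix' D₁.mulVecLin * LinearMap.toMatrix' s = 1 := by
      rw [← LinearMap.toMatrix'_comp, hs, LinearMap.toMatrix'_id]
    rw [← Matrix.toLin'_apply', LinearMap.toMatrix'_toLin'] at h
    exact h
  -- `D₁ * D₀ = 0`
  have hD₁D₀ : D₁ * D₀ = 0 := by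
    have hcomp : D₁.mulVecLin ∘ₗ D₀.mulVecLin = 0 := by
      apply LinearMap.ext
      intro v
      have hmem : D₀.mulVecLin v ∈ LinearMap.ker D₁.mulVecLin := by
        rw [← hexact]; exact LinearMap.mem_range_self _ v
      simpa using hmem
    have h0 : (D₁ * D₀).mulVecLin = 0 := by rw [Matrix.mulVecLin_mul, hcomp]
    have := congrArg LinearMap.toMatrix' h0
    rwa [← Matrix.toLin'_apply', LinearMap.toMatrix'_toLin', map_zero] at this
  -- the standard identification
  let e : Fin p ⊕ Fin r ≃ Fin q := finSumFinEquiv.trans (finCongr hq.symm)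
  let T : Matrix (Fin p ⊕ Fin r) (Fin q) k := Matrix.fromRows G D₁
  refine ⟨(T.submatrix id e).det, ?_⟩
  -- `lam ≠ 0`
  have hlam : (T.submatrix id e).det ≠ 0 := by
    have hmul : T * Matrix.fromCols D₀ S =
        Matrix.fromBlocks 1 (G * S) 0 1 := by
      rw [Matrix.fromRows_mul_fromCols, hGD₀, hD₁D₀, hD₁S]
    have hdet : (T * Matrix.fromCols D₀ S).det = 1 := by
      rw [hmul, Matrix.det_fromBlocks_zero₂₁, Matrix.det_one, Matrix.det_one, one_mul]
    have hfac : (T.submatrix id e) * ((Matrix.fromCols D₀ S).submatrix e id)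
        = T * Matrix.fromCols D₀ S := by
      rw [Matrix.submatrix_mul_equiv, Matrix.submatrix_id_id]
    intro h
    have := congrArg Matrix.det hfac
    rw [Matrix.det_mul, h, zero_mul, hdet] at this
    exact zero_ne_one this
  intro I hI hIc
  set emb1 := Iᶜ.orderEmbOfFin hIc with hemb1
  set emb2 := I.orderEmbOfFin hI with hemb2
  -- the matrix of unit columns indexed by `I`
  set P : Matrix (Fin q) (Fin r) k :=
    Matrix.of (fun i j => if emb2 j = i then (1 : k) else 0) with hP
  set FC : Matrix (Fin q) (Fin p ⊕ Fin r) k := Matrix.fromCols D₀ P with hFC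
  -- the identification determined by `I`
  have hu : Function.Bijective (Sum.elim (fun i => (emb1 i : Fin q)) fun i => (emb2 i : Fin q)) := by
    rw [Fintype.bijective_iff_injective_and_card]
    constructor
    · rintro (a | a) (b | b) hab
      · exact congrArg Sum.inl (emb1.injective (by simpa using hab))
      · exfalso
        have h1 : emb1 a ∈ Iᶜ := Finset.orderEmbOfFin_mem _ hIc a
        have h2 : emb2 b ∈ I := Finset.orderEmbOfFin_mem _ hI b
        simp only [Sum.elim_inl, Sum.elim_inr] at hab
        rw [hab] at h1
        exact (Finset.mem_compl.mp h1) h2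
      · exfalso
        have h1 : emb1 b ∈ Iᶜ := Finset.orderEmbOfFin_mem _ hIc b
        have h2 : emb2 a ∈ I := Finset.orderEmbOfFin_mem _ hI a
        simp only [Sum.elim_inl, Sum.elim_inr] at hab
        rw [← hab] at h1
        exact (Finset.mem_compl.mp h1) h2
      · exact congrArg Sum.inr (emb2.injective (by simpa using hab))
    · simp [hq]
  set gI : Fin p ⊕ Fin r ≃ Fin q := Equiv.ofBijective _ hu with hgI
  -- block computation of `T * FC`
  have hDP : D₁ * P = D₁.submatrix id emb2 := by
    ext i j
    simp only [Matrix.mul_apply, hP, Matrix.of_apply, mul_ite, mul_one, mul_zero,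
      Matrix.submatrix_apply, id_eq]
    rw [Finset.sum_ite_eq (Finset.univ : Finset (Fin q)) (emb2 j) (fun x => D₁ i x)]
    simp
  have hTFC : T * FC = Matrix.fromBlocks 1 (G * P) 0 (D₁.submatrix id emb2) := by
    rw [hFC, Matrix.fromRows_mul_fromCols, hGD₀, hD₁D₀, hDP]
  have hdet1 : (T * FC).det = (D₁.submatrix id emb2).det := by
    rw [hTFC, Matrix.det_fromBlocks_zero₂₁, Matrix.det_one, one_mul]
  have hfact : (D₁.submatrix id emb2).det = (T.submatrix id e).det * (FC.submatrix e id).det := by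
    rw [← hdet1, ← Matrix.det_mul, Matrix.submatrix_mul_equiv, Matrix.submatrix_id_id]
  -- block computation of `FC` with rows permuted according to `I`
  have hblock : FC.submatrix gI id =
      Matrix.fromBlocks (D₀.submatrix emb1 id) 0 (D₀.submatrix emb2 id) 1 := by
    ext i j
    rcases i with i | i <;> rcases j with j | j
    · simp [hFC, hgI, Equiv.ofBijective]
    · have hne : emb2 j ≠ emb1 i := by
        intro h
        have h1 : emb1 i ∈ Iᶜ := Finset.orderEmbOfFin_mem _ hIc i
        have h2 : emb2 j ∈ I := Finset.orderEmbOfFin_mem _ hI j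
        rw [h] at h2
        exact (Finset.mem_compl.mp h1) h2
      simp [hFC, hgI, Equiv.ofBijective, hP, hne]
    · simp [hFC, hgI, Equiv.ofBijective]
    · simp only [hFC, hgI, Equiv.ofBijective, Equiv.coe_fn_mk, Sum.elim_inr,
        Matrix.submatrix_apply, id_eq, Matrix.fromCols_apply_inr, hP, Matrix.of_apply,
        Matrix.fromBlocks_apply₂₂, Matrix.one_apply]
      by_cases h : i = j
      · simp [h]
      · rw [if_neg (fun hh => h ((emb2.injective hh).symm)), if_neg h]
  have hdet2 : (FC.submatrix gI id).det = (D₀.submatrix emb1 id).det := by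
    rw [hblock, Matrix.det_fromBlocks_zero₁₂, Matrix.det_one, mul_one]
  -- relate the two row arrangements by a permutation
  set σ : Equiv.Perm (Fin p ⊕ Fin r) := gI.trans e.symm with hσ
  have hperm : FC.submatrix gI id = (FC.submatrix e id).submatrix σ id := by
    ext i j
    simp [hσ, Matrix.submatrix_apply]
  have hsign : (FC.submatrix gI id).det
      = ((Equiv.Perm.sign σ : ℤ) : k) * (FC.submatrix e id).det := by
    rw [hperm, Matrix.det_permute]
  rcases Int.units_eq_one_or (Equiv.Perm.sign σ) with hsgn | hsgn
  · have hFCe : (FC.submatrix e id).det = (D₀.submatrix emb1 id).det := by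
      rw [← hdet2, hsign, hsgn]; norm_num
    have hmain : (D₁.submatrix id emb2).det
        = (T.submatrix id e).det * (D₀.submatrix emb1 id).det := by
      rw [hfact, hFCe]
    refine ⟨?_, Or.inl hmain⟩
    rw [hmain]
    constructor
    · intro h; exact mul_ne_zero hlam h
    · intro h h0; rw [h0, mul_zero] at h; exact h rfl
  · have hFCe : (FC.submatrix e id).det = -(D₀.submatrix emb1 id).det := by
      have := hsign
      rw [hdet2, hsgn] at this
      norm_num at this
      rw [this]; ring
    have hmain : (D₁.submatrix id emb2).det
        = -((T.submatrix id e).det * (D₀.submatrix emb1 id).det) := by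
      rw [hfact, hFCe]; ring
    refine ⟨?_, Or.inr hmain⟩
    rw [hmain]
    constructor
    · intro h
      simp only [ne_eq, neg_eq_zero]
      exact mul_ne_zero hlam h
    · intro h h0; rw [h0, mul_zero, neg_zero] at h; exact h rfl
end
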